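/- arXiv:1904.03322 — 2 statements merged into one kernel-verified Lean document; each statement's English description precedes it below -/
import Mathlib

section
/- An allocation x and price curves g form a price curve equilibrium if and only if all of the following hold: (1) for every agent i, x_{ij} = w_{ij}·u_i(x_i) whenever g_j is not identically zero; (2) for every agent i, C_g(x_i) = Σ_j g_j(x_{ij}) = 1; and (3) for every good j, Σ_i x_{ij} ≤ s_j, with Σ_i x_{ij} = s_j whenever g_j is not identically zero. -/
open scoped Classical
open Real

namespace BandwidthAlloc

/-- A bid: `none` denotes the special bid β; `some r` denotes the real bid `r ≥ 0`. -/
abbrev Bid := Option NNReal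

/-- Numeric value of a bid (β is treated as 0 in arithmetic). -/
noncomputable def bval (b : Bid) : ℝ := ((b.getD 0 : NNReal) : ℝ)

/-- A bid is positive when it is neither 0 nor β. -/
def posBid (b : Bid) : Prop := 0 < bval b

/-- Utility of the bundle `xi` for an agent with desired set `Ri`: `min_{j ∈ Ri} xi j`. -/
noncomputable def bundleUtil {m : ℕ} (Ri : Finset (Fin m)) (xi : Fin m → ℝ) : ℝ :=
  sInf (xi '' (Ri : Set (Fin m)))

/-- Bandwidth-allocation utility of agent `i` under allocation `x`. -/
noncomputable def util {n m : ℕ} (R : Fin n → Finset (Fin m))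
    (x : Fin n → Fin m → ℝ) (i : Fin n) : ℝ :=
  bundleUtil (R i) (x i)

/-- Weights: `w R i j = 1` iff `j ∈ R i`, else `0`. -/
noncomputable def w {n m : ℕ} (R : Fin n → Finset (Fin m)) (i : Fin n) (j : Fin m) : ℝ :=
  if j ∈ R i then 1 else 0

/-- A valid (nonnegative, supply-respecting) allocation. -/
def validAlloc {n m : ℕ} (s : Fin m → ℝ) (x : Fin n → Fin m → ℝ) : Prop :=
  (∀ i j, 0 ≤ x i j) ∧ ∀ j, ∑ i, x i j ≤ s j

/-- CES welfare of the utility vector `v` (`ρ = 0` is Nash welfare; for `ρ < 0` a zero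
utility yields welfare `0`, the limiting convention). -/
noncomputable def ces (ρ : ℝ) {n : ℕ} (v : Fin n → ℝ) : ℝ :=
  if ρ = 0 then ∏ i, v i
  else if ρ < 0 ∧ ∃ i, v i = 0 then 0
  else (∑ i, v i ^ ρ) ^ (1 / ρ)

/-- `Ψ_ρ`: `x` is a valid allocation maximizing CES welfare among valid allocations. -/
def maxCES (ρ : ℝ) {n m : ℕ} (s : Fin m → ℝ) (R : Fin n → Finset (Fin m))
    (x : Fin n → Fin m → ℝ) : Prop :=
  validAlloc s x ∧ ∀ y, validAlloc s y → ces ρ (util R y) ≤ ces ρ (util R x)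

/-- Constraint curve: continuous, normalized, strictly increasing, nonnegative on `[0,∞)`. -/
def IsConstraintCurve (f : ℝ → ℝ) : Prop :=
  ContinuousOn f (Set.Ici 0) ∧ f 0 = 0 ∧ StrictMonoOn f (Set.Ici 0) ∧
    ∀ y ∈ Set.Ici (0 : ℝ), 0 ≤ f y

/-- `g` is identically zero on `[0,∞)`. -/
def zeroOn (g : ℝ → ℝ) : Prop := ∀ y ∈ Set.Ici (0 : ℝ), g y = 0

/-- Price curve: continuous, normalized, nonnegative, and either strictly increasing or
identically zero on `[0,∞)`. -/
def IsPriceCurve (g : ℝ → ℝ) : Prop :=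
  ContinuousOn g (Set.Ici 0) ∧ g 0 = 0 ∧ (∀ y ∈ Set.Ici (0 : ℝ), 0 ≤ g y) ∧
    (StrictMonoOn g (Set.Ici 0) ∨ zeroOn g)

/-- Cost of the bundle `xi` under price curves `g`. -/
noncomputable def cost {m : ℕ} (g : Fin m → ℝ → ℝ) (xi : Fin m → ℝ) : ℝ :=
  ∑ j, g j (xi j)

/-- `xi` is in the demand set of an agent with desired set `Ri` under price curves `g`. -/
def inDemand {m : ℕ} (g : Fin m → ℝ → ℝ) (Ri : Finset (Fin m)) (xi : Fin m → ℝ) : Prop :=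
  (∀ j, 0 ≤ xi j) ∧ cost g xi ≤ 1 ∧
    ∀ yi : Fin m → ℝ, (∀ j, 0 ≤ yi j) → cost g yi ≤ 1 → bundleUtil Ri yi ≤ bundleUtil Ri xi

/-- Price curve equilibrium. -/
def isPCE {n m : ℕ} (s : Fin m → ℝ) (R : Fin n → Finset (Fin m))
    (x : Fin n → Fin m → ℝ) (g : Fin m → ℝ → ℝ) : Prop :=
  (∀ i, inDemand g (R i) (x i)) ∧ (∀ j, ∑ i, x i j ≤ s j) ∧
    ∀ j, ¬ zeroOn (g j) → ∑ i, x i j = s j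

/-- Step 1 of the ATP allocation rule: proportional sharing. -/
noncomputable def atp1 {n m : ℕ} (s : Fin m → ℝ) (b : Fin n → Fin m → Bid)
    (i : Fin n) (j : Fin m) : ℝ :=
  bval (b i j) / (∑ k, bval (b k j)) * s j

/-- Steps 1–2 of the ATP allocation rule: goods with a positive bid are shared
proportionally; on a good where everyone bids `0` or `β`, an agent bidding `β` receives
as much as she receives of some fixed good on which she bids positively. -/
noncomputable def atp2 {n m : ℕ} (s : Fin m → ℝ) (b : Fin n → Fin m → Bid)
    (i : Fin n) (j : Fin m) : ℝ :=
  if ∃ k, posBid (b k j) then atp1 s b i j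
  else if b i j = none then
    (if h : ∃ ℓ, posBid (b i ℓ) then atp1 s b i (Classical.choose h) else 0)
  else 0

/-- The full ATP allocation rule (steps 1–3): agents bidding `β` on an oversubscribed
step-2 good are penalized with the zero bundle. -/
noncomputable def atp {n m : ℕ} (s : Fin m → ℝ) (b : Fin n → Fin m → Bid)
    (i : Fin n) (j : Fin m) : ℝ :=
  if ∃ ℓ, (¬ ∃ k, posBid (b k ℓ)) ∧ b i ℓ = none ∧ s ℓ < ∑ k, atp2 s b k ℓ then 0
  else atp2 s b i j

/-- Total bid-constraint cost `C_f(b_i)` of agent `i`'s bid vector. -/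
noncomputable def bidCost {m : ℕ} (f : Fin m → ℝ → ℝ) (bi : Fin m → Bid) : ℝ :=
  ∑ j, f j (bval (bi j))

/-- A bid vector is feasible if it obeys the bid constraint `C_f(b_i) ≤ 1`. -/
def feasibleBid {m : ℕ} (f : Fin m → ℝ → ℝ) (bi : Fin m → Bid) : Prop :=
  bidCost f bi ≤ 1

/-- `b` is a Nash equilibrium of `ATP(f)`: all bids are feasible and no agent can
strictly increase her utility by a unilateral feasible deviation. -/
def isNE {n m : ℕ} (s : Fin m → ℝ) (f : Fin m → ℝ → ℝ)
    (R : Fin n → Finset (Fin m)) (b : Fin n → Fin m → Bid) : Prop :=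
  (∀ i, feasibleBid f (b i)) ∧
    ∀ (i : Fin n) (bi' : Fin m → Bid), feasibleBid f bi' →
      util R (atp s (Function.update b i bi')) i ≤ util R (atp s b) i

/-- `NE_X(ATP(f))`: allocations arising from Nash equilibrium bid profiles. -/
def NEX {n m : ℕ} (s : Fin m → ℝ) (f : Fin m → ℝ → ℝ)
    (R : Fin n → Finset (Fin m)) : Set (Fin n → Fin m → ℝ) :=
  {x | ∃ b, isNE s f R b ∧ x = atp s b}

/-- `f` is homogeneous of degree `α` on the nonnegative reals. -/
def Homog (f : ℝ → ℝ) (α : ℝ) : Prop :=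
  ∀ c ≥ (0 : ℝ), ∀ y ≥ (0 : ℝ), f (c * y) = c ^ α * f y

/-- `γ* = max {γ ≥ 0 : γ · Σ_i w_{ij} ≤ s_j for all j}` of Mechanism 1. -/
noncomputable def gammaStar {n m : ℕ} (s : Fin m → ℝ) (R : Fin n → Finset (Fin m)) : ℝ :=
  sSup {γ : ℝ | 0 ≤ γ ∧ ∀ j, γ * ∑ i, w R i j ≤ s j}

/-- Mechanism 1: `x i j = γ* · w i j`. -/
noncomputable def mech1 {n m : ℕ} (s : Fin m → ℝ) (R : Fin n → Finset (Fin m)) :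
    Fin n → Fin m → ℝ :=
  fun i j => gammaStar s R * w R i j

/-- `min_i u_i(x_i)`. -/
noncomputable def minUtil {n m : ℕ} (R : Fin n → Finset (Fin m))
    (x : Fin n → Fin m → ℝ) : ℝ :=
  sInf (Set.range fun i => util R x i)

/-- `x` is maxmin-optimal: valid and attaining the maximum of `min_i u_i` over valid
allocations. -/
def maxminOptimal {n m : ℕ} (s : Fin m → ℝ) (R : Fin n → Finset (Fin m))
    (x : Fin n → Fin m → ℝ) : Prop :=
  validAlloc s x ∧ ∀ y, validAlloc s y → minUtil R y ≤ minUtil R x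

/-- Mechanism 2: `P i k` is the set agent `i` claims agent `k` desires.
`eta P i = |{k : R_k(k) ≠ R_k(i)}|`. -/
noncomputable def eta {n m : ℕ} (P : Fin n → Fin n → Finset (Fin m)) (i : Fin n) : ℕ :=
  (Finset.univ.filter fun k => P k k ≠ P i k).card

/-- Agent `i` is in `N̄`: for some `k`, `R_k(k) ⊊ R_k(i)`. -/
def inNbar {n m : ℕ} (P : Fin n → Fin n → Finset (Fin m)) (i : Fin n) : Prop :=
  ∃ k, P k k ⊂ P i k

/-- The penalty factor `α_i` of Mechanism 2. -/
noncomputable def alpha {n m : ℕ} (P : Fin n → Fin n → Finset (Fin m)) (i : Fin n) : ℝ :=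
  if inNbar P i then 0 else 1 - (eta P i : ℝ) / n

/-- Effective reported sets of Mechanism 2: agents in `N̄` are replaced by `∅`. -/
noncomputable def effSets {n m : ℕ} (P : Fin n → Fin n → Finset (Fin m)) :
    Fin n → Finset (Fin m) :=
  fun i => if inNbar P i then ∅ else P i i

/-- Mechanism 2: the allocation `x_i = α_i · y_i` where `y` is the Mechanism 1 outcome
on the effective sets. -/
noncomputable def mech2 {n m : ℕ} (s : Fin m → ℝ) (P : Fin n → Fin n → Finset (Fin m)) :
    Fin n → Fin m → ℝ :=
  fun i j => alpha P i * mech1 s (effSets P) i j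

section PCEHelpers

variable {m : ℕ}

lemma bundleUtil_le' {Ri : Finset (Fin m)} (xi : Fin m → ℝ) {j : Fin m} (hj : j ∈ Ri) :
    bundleUtil Ri xi ≤ xi j :=
  csInf_le ((Ri.finite_toSet.image xi).bddBelow) ⟨j, hj, rfl⟩

lemma le_bundleUtil' {Ri : Finset (Fin m)} (hRi : Ri.Nonempty) {xi : Fin m → ℝ} {c : ℝ}
    (h : ∀ j ∈ Ri, c ≤ xi j) : c ≤ bundleUtil Ri xi := by
  apply le_csInf ((Finset.coe_nonempty.mpr hRi).image xi)
  rintro b ⟨j, hj, rfl⟩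
  exact h j hj

lemma exists_eps (g : Fin m → ℝ → ℝ) (hg : ∀ j, IsPriceCurve (g j)) (yi : Fin m → ℝ)
    (hyi : ∀ j, 0 ≤ yi j) (h : cost g yi < 1) :
    ∃ ε > 0, cost g (fun j => yi j + ε) ≤ 1 := by
  have htend : Filter.Tendsto (fun ε : ℝ => cost g (fun j => yi j + ε))
      (nhdsWithin 0 (Set.Ioi 0)) (nhds (cost g yi)) := by
    unfold cost
    apply tendsto_finset_sum
    intro j _
    have houter : Filter.Tendsto (g j) (nhdsWithin (yi j) (Set.Ici 0)) (nhds (g j (yi j))) :=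
      (hg j).1 (yi j) (hyi j)
    have hinner : Filter.Tendsto (fun ε : ℝ => yi j + ε) (nhdsWithin 0 (Set.Ioi 0))
        (nhdsWithin (yi j) (Set.Ici 0)) := by
      rw [tendsto_nhdsWithin_iff]
      constructor
      · have : Filter.Tendsto (fun ε : ℝ => yi j + ε) (nhds 0) (nhds (yi j + 0)) :=
          (continuous_const.add continuous_id).tendsto 0
        rw [add_zero] at this
        exact this.mono_left nhdsWithin_le_nhds
      · filter_upwards [self_mem_nhdsWithin] with ε hε
        have : (0 : ℝ) < ε := hε
        have := hyi j
        simp only [Set.mem_Ici]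
        linarith
    exact houter.comp hinner
  have hev : ∀ᶠ ε in nhdsWithin (0 : ℝ) (Set.Ioi 0),
      cost g (fun j => yi j + ε) < 1 := htend.eventually_lt_const h
  have : ∃ ε ∈ Set.Ioi (0 : ℝ), cost g (fun j => yi j + ε) < 1 := by
    have := (hev.and self_mem_nhdsWithin).exists
    obtain ⟨ε, h1, h2⟩ := this
    exact ⟨ε, h2, h1⟩
  obtain ⟨ε, hε, hlt⟩ := this
  exact ⟨ε, hε, hlt.le⟩

end PCEHelpers

/-- Lemma pc-eq: `(x, g)` is a price curve equilibrium iff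
(1) `x_{ij} = w_{ij}·u_i(x_i)` whenever `g_j` is not identically zero;
(2) `C_g(x_i) = 1` for every agent; and
(3) supply is respected, with equality whenever `g_j` is not identically zero. -/
theorem pc_eq {n m : ℕ} (s : Fin m → ℝ) (hs : ∀ j, 0 < s j)
    (R : Fin n → Finset (Fin m)) (hR : ∀ i, (R i).Nonempty)
    (g : Fin m → ℝ → ℝ) (hg : ∀ j, IsPriceCurve (g j))
    (x : Fin n → Fin m → ℝ) (hxnn : ∀ i j, 0 ≤ x i j) :
    isPCE s R x g ↔
      ((∀ (i : Fin n) (j : Fin m), ¬ zeroOn (g j) →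
          x i j = w R i j * util R x i) ∧
        (∀ i, cost g (x i) = 1) ∧
        (∀ j, ∑ i, x i j ≤ s j) ∧
        ∀ j, ¬ zeroOn (g j) → ∑ i, x i j = s j) := by
  have hsm : ∀ j, ¬ zeroOn (g j) → StrictMonoOn (g j) (Set.Ici 0) := fun j hz =>
    ((hg j).2.2.2).resolve_right hz
  have hgnn : ∀ j y, 0 ≤ y → 0 ≤ g j y := fun j y hy => (hg j).2.2.1 y hy
  have hg0 : ∀ j, g j 0 = 0 := fun j => (hg j).2.1
  constructor
  · rintro ⟨hdem, hsup, hclear⟩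
    have hun : ∀ i, (0 : ℝ) ≤ util R x i := fun i =>
      le_bundleUtil' (hR i) (fun k _ => hxnn i k)
    refine ⟨?_, ?_, hsup, hclear⟩
    · intro i j hz
      set u := util R x i with hu
      -- key: x i j ≤ w R i j * u
      have hle : x i j ≤ w R i j * u := by
        by_contra hlt
        push_neg at hlt
        have hwnn : 0 ≤ w R i j * u := by
          unfold w; split <;> simp [hun i, hu]
        set yi := Function.update (x i) j (w R i j * u) with hyi
        have hynn : ∀ k, 0 ≤ yi k := by
          intro k
          by_cases hk : k = j
          · subst hk; simp [hyi, hwnn]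
          · simp [hyi, Function.update_of_ne hk, hxnn]
        have hterm : ∀ k ∈ Finset.univ, g k (yi k) ≤ g k (x i k) := by
          intro k _
          by_cases hk : k = j
          · subst hk
            simp only [hyi, Function.update_self]
            exact ((hsm k hz).monotoneOn hwnn (le_trans hwnn hlt.le) hlt.le)
          · simp [hyi, Function.update_of_ne hk]
        have hstrict : g j (yi j) < g j (x i j) := by
          simp only [hyi, Function.update_self]
          exact (hsm j hz) hwnn (le_trans hwnn hlt.le) hlt
        have hclt : cost g yi < cost g (x i) :=
          Finset.sum_lt_sum hterm ⟨j, Finset.mem_univ j, hstrict⟩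
        have hc1 : cost g yi < 1 := lt_of_lt_of_le hclt (hdem i).2.1
        obtain ⟨ε, hε, hce⟩ := exists_eps g hg yi hynn hc1
        have hmax := (hdem i).2.2 (fun k => yi k + ε) (fun k => add_nonneg (hynn k) hε.le) hce
        have hlb : u + ε ≤ bundleUtil (R i) (fun k => yi k + ε) := by
          apply le_bundleUtil' (hR i)
          intro k hk
          by_cases hkj : k = j
          · subst hkj
            have hwk : w R i k = 1 := if_pos hk
            simp [hyi, hwk]
          · have : u ≤ x i k := bundleUtil_le' (x i) hk
            simp only [hyi, Function.update_of_ne hkj]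
            linarith
        have : bundleUtil (R i) (fun k => yi k + ε) ≤ u := hmax
        linarith
      by_cases hjR : j ∈ R i
      · have h1 : u ≤ x i j := bundleUtil_le' (x i) hjR
        have hw : w R i j = 1 := if_pos hjR
        rw [hw] at hle ⊢
        rw [one_mul] at hle ⊢
        linarith
      · have hw : w R i j = 0 := if_neg hjR
        rw [hw] at hle ⊢
        rw [zero_mul] at hle ⊢
        linarith [hxnn i j]
    · intro i
      refine le_antisymm (hdem i).2.1 ?_
      by_contra hlt
      push_neg at hlt
      obtain ⟨ε, hε, hce⟩ := exists_eps g hg (x i) (hxnn i) hlt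
      have hmax := (hdem i).2.2 (fun k => x i k + ε) (fun k => add_nonneg (hxnn i k) hε.le) hce
      have hlb : util R x i + ε ≤ bundleUtil (R i) (fun k => x i k + ε) :=
        le_bundleUtil' (hR i) fun k hk => by
          have h : util R x i ≤ x i k := bundleUtil_le' (x i) hk
          linarith
      have : bundleUtil (R i) (fun k => x i k + ε) ≤ util R x i := hmax
      linarith
  · rintro ⟨h1, h2, h3a, h3b⟩
    refine ⟨fun i => ⟨hxnn i, (h2 i).le, ?_⟩, h3a, h3b⟩
    intro yi hynn hyc
    by_contra hgt
    push_neg at hgt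
    set u := util R x i with hu
    have hun : (0 : ℝ) ≤ u := le_bundleUtil' (hR i) (fun k _ => hxnn i k)
    have hex : ∃ j₀ ∈ R i, ¬ zeroOn (g j₀) := by
      by_contra hno
      push_neg at hno
      have hzero : cost g (x i) = 0 := by
        apply Finset.sum_eq_zero
        intro j _
        by_cases hz : zeroOn (g j)
        · exact hz _ (hxnn i j)
        · have hjR : j ∉ R i := fun hmem => hz (hno j hmem)
          have hw : w R i j = 0 := if_neg hjR
          rw [h1 i j hz, hw, zero_mul, hg0]
      rw [h2 i] at hzero
      exact one_ne_zero hzero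
    obtain ⟨j₀, hj₀R, hj₀z⟩ := hex
    have hterm : ∀ j ∈ Finset.univ, g j (x i j) ≤ g j (yi j) := by
      intro j _
      by_cases hz : zeroOn (g j)
      · rw [hz _ (hxnn i j), hz _ (hynn j)]
      · rw [h1 i j hz]
        by_cases hjR : j ∈ R i
        · have hw : w R i j = 1 := if_pos hjR
          rw [hw, one_mul]
          have hylb : u < yi j := lt_of_lt_of_le hgt (bundleUtil_le' yi hjR)
          exact ((hsm j hz).monotoneOn hun (le_trans hun hylb.le) hylb.le)
        · have hw : w R i j = 0 := if_neg hjR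
          rw [hw, zero_mul, hg0]
          exact hgnn j _ (hynn j)
    have hstrict : g j₀ (x i j₀) < g j₀ (yi j₀) := by
      rw [h1 i j₀ hj₀z]
      have hw : w R i j₀ = 1 := if_pos hj₀R
      rw [hw, one_mul]
      have hylb : u < yi j₀ := lt_of_lt_of_le hgt (bundleUtil_le' yi hj₀R)
      exact (hsm j₀ hj₀z) hun (le_trans hun hylb.le) hylb
    have hclt : cost g (x i) < cost g yi :=
      Finset.sum_lt_sum hterm ⟨j₀, Finset.mem_univ j₀, hstrict⟩
    rw [h2 i] at hclt
    linarith

end BandwidthAlloc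
end

section
/- Let a_1,…,a_m be positive constants and let f be constraint curves where each f_j is homogeneous of degree α_j > 0. Define constraint curves f' by f'_j(b) = a_j·f_j(b). Then every allocation that arises from some Nash equilibrium bid profile of ATP(f) also arises from some Nash equilibrium bid profile of ATP(f'), i.e., NE_X(ATP(f)) ⊆ NE_X(ATP(f')). -/
open scoped Classical
open Real

namespace BandwidthAlloc

noncomputable def scaleBid {m : ℕ} (c : Fin m → NNReal) (bi : Fin m → Bid) : Fin m → Bid :=
  fun j => (bi j).map (fun r => c j * r)

lemma bval_scale (c : NNReal) (b : Bid) :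
    bval (b.map (fun r => c * r)) = (c : ℝ) * bval b := by
  cases b
  · simp only [Option.map_none, bval, Option.getD_none, NNReal.coe_zero, mul_zero]
  · simp only [Option.map_some, bval, Option.getD_some, NNReal.coe_mul]

lemma posBid_scale {c : NNReal} (hc : 0 < c) (b : Bid) :
    posBid (b.map (fun r => c * r)) ↔ posBid b := by
  unfold posBid
  rw [bval_scale]
  constructor
  · intro h
    by_contra hb
    push_neg at hb
    nlinarith [(NNReal.coe_pos.mpr hc : (0:ℝ) < c)]
  · intro h
    exact mul_pos (NNReal.coe_pos.mpr hc) h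

lemma scaleBid_none_iff {m : ℕ} (c : Fin m → NNReal) (bi : Fin m → Bid) (j : Fin m) :
    scaleBid c bi j = none ↔ bi j = none := by
  unfold scaleBid
  exact Option.map_eq_none_iff

lemma choose_congr {ι : Sort*} {P Q : ι → Prop} (hPQ : P = Q)
    (h : ∃ x, P x) (h' : ∃ x, Q x) :
    Classical.choose h = Classical.choose h' := by
  subst hPQ; rfl

lemma atp1_scale {n m : ℕ} (c : Fin m → NNReal) (hc : ∀ j, 0 < c j) (s : Fin m → ℝ)
    (b : Fin n → Fin m → Bid) :
    atp1 s (fun k => scaleBid c (b k)) = atp1 s b := by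
  funext i j
  unfold atp1 scaleBid
  simp only [bval_scale, ← Finset.mul_sum]
  rw [mul_div_mul_left _ _ (ne_of_gt (NNReal.coe_pos.mpr (hc j)))]

lemma atp2_scale {n m : ℕ} (c : Fin m → NNReal) (hc : ∀ j, 0 < c j) (s : Fin m → ℝ)
    (b : Fin n → Fin m → Bid) :
    atp2 s (fun k => scaleBid c (b k)) = atp2 s b := by
  funext i j
  unfold atp2
  have hpos : ∀ k j', posBid (scaleBid c (b k) j') ↔ posBid (b k j') := by
    intro k j'; exact posBid_scale (hc j') _
  have hp : (fun ℓ => posBid (scaleBid c (b i) ℓ)) = fun ℓ => posBid (b i ℓ) :=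
    funext fun ℓ => propext (hpos i ℓ)
  rw [atp1_scale c hc s b]
  beta_reduce
  by_cases h1 : ∃ k, posBid (b k j)
  · rw [if_pos h1, if_pos ((exists_congr fun k => hpos k j).mpr h1)]
  · rw [if_neg h1, if_neg (fun h => h1 ((exists_congr fun k => hpos k j).mp h))]
    by_cases h2 : b i j = none
    · rw [if_pos h2, if_pos ((scaleBid_none_iff c (b i) j).mpr h2)]
      by_cases h3 : ∃ ℓ, posBid (b i ℓ)
      · have h3' : ∃ ℓ, posBid (scaleBid c (b i) ℓ) := hp ▸ h3
        rw [dif_pos h3', dif_pos h3, choose_congr hp h3' h3]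
      · have h3' : ¬ ∃ ℓ, posBid (scaleBid c (b i) ℓ) := fun h => h3 (hp ▸ h)
        rw [dif_neg h3', dif_neg h3]
    · rw [if_neg h2, if_neg (fun h => h2 ((scaleBid_none_iff c (b i) j).mp h))]

lemma atp_scale {n m : ℕ} (c : Fin m → NNReal) (hc : ∀ j, 0 < c j) (s : Fin m → ℝ)
    (b : Fin n → Fin m → Bid) :
    atp s (fun k => scaleBid c (b k)) = atp s b := by
  funext i j
  unfold atp
  rw [atp2_scale c hc s b]
  have hcond : (∃ ℓ, (¬ ∃ k, posBid (scaleBid c (b k) ℓ)) ∧ scaleBid c (b i) ℓ = none ∧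
      s ℓ < ∑ k, atp2 s b k ℓ) ↔
      (∃ ℓ, (¬ ∃ k, posBid (b k ℓ)) ∧ b i ℓ = none ∧ s ℓ < ∑ k, atp2 s b k ℓ) := by
    refine exists_congr fun ℓ => ?_
    rw [scaleBid_none_iff]
    constructor
    · rintro ⟨h1, h2, h3⟩
      exact ⟨fun ⟨k, hk⟩ => h1 ⟨k, (posBid_scale (hc ℓ) _).mpr hk⟩, h2, h3⟩
    · rintro ⟨h1, h2, h3⟩
      exact ⟨fun ⟨k, hk⟩ => h1 ⟨k, (posBid_scale (hc ℓ) _).mp hk⟩, h2, h3⟩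
  by_cases h : ∃ ℓ, (¬ ∃ k, posBid (b k ℓ)) ∧ b i ℓ = none ∧ s ℓ < ∑ k, atp2 s b k ℓ
  · rw [if_pos h, if_pos (hcond.mpr h)]
  · rw [if_neg h, if_neg (fun h' => h (hcond.mp h'))]

lemma bval_nonneg (b : Bid) : 0 ≤ bval b := (b.getD 0).coe_nonneg

/-- Lemma scaling, one inclusion: scaling homogeneous constraint curves by
positive constants `a_j` only enlarges the set of Nash equilibrium allocations:
`NE_X(ATP(f)) ⊆ NE_X(ATP(f'))` where `f'_j(b) = a_j · f_j(b)`. -/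
theorem scaling_subset {n m : ℕ} (s : Fin m → ℝ) (hs : ∀ j, 0 < s j)
    (R : Fin n → Finset (Fin m)) (hR : ∀ i, (R i).Nonempty)
    (a : Fin m → ℝ) (ha : ∀ j, 0 < a j)
    (f : Fin m → ℝ → ℝ) (hf : ∀ j, IsConstraintCurve (f j))
    (α : Fin m → ℝ) (hα : ∀ j, 0 < α j) (hhom : ∀ j, Homog (f j) (α j)) :
    NEX s f R ⊆ NEX s (fun j y => a j * f j y) R := by
  intro x hx
  obtain ⟨b, ⟨hfeas, hne⟩, rfl⟩ := hx
  set c : Fin m → NNReal := fun j => Real.toNNReal ((a j) ^ (-(1 / α j))) with hc_def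
  have hrpos : ∀ j, (0:ℝ) < (a j) ^ (-(1 / α j)) := fun j => Real.rpow_pos_of_pos (ha j) _
  have hcpos : ∀ j, 0 < c j := fun j => Real.toNNReal_pos.mpr (hrpos j)
  have hcoe : ∀ j, (c j : ℝ) = (a j) ^ (-(1 / α j)) := fun j =>
    Real.coe_toNNReal _ (le_of_lt (hrpos j))
  have hexp1 : ∀ j, (-(1 / α j)) * α j = -1 := by
    intro j; field_simp; rw [div_self (ne_of_gt (hα j))]
  have hexp2 : ∀ j, (1 / α j) * α j = 1 := by
    intro j; field_simp; rw [div_self (ne_of_gt (hα j))]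
  have hkey1 : ∀ j y, 0 ≤ y → a j * f j ((c j : ℝ) * y) = f j y := by
    intro j y hy
    rw [hcoe, hhom j _ (le_of_lt (hrpos j)) y hy, ← Real.rpow_mul (le_of_lt (ha j)),
      hexp1 j, Real.rpow_neg_one, ← mul_assoc, mul_inv_cancel₀ (ne_of_gt (ha j)), one_mul]
  have hkey2 : ∀ j y, 0 ≤ y → f j (((c j)⁻¹ : NNReal) * y) = a j * f j y := by
    intro j y hy
    have hinv : (((c j)⁻¹ : NNReal) : ℝ) = (a j) ^ (1 / α j) := by
      rw [NNReal.coe_inv, hcoe, ← Real.rpow_neg (le_of_lt (ha j)), neg_neg]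
    rw [hinv, hhom j _ (le_of_lt (Real.rpow_pos_of_pos (ha j) _)) y hy,
      ← Real.rpow_mul (le_of_lt (ha j)), hexp2 j, Real.rpow_one]
  have hcost1 : ∀ bi : Fin m → Bid,
      bidCost (fun j y => a j * f j y) (scaleBid c bi) = bidCost f bi := by
    intro bi
    unfold bidCost
    refine Finset.sum_congr rfl fun j _ => ?_
    show a j * f j (bval (scaleBid c bi j)) = f j (bval (bi j))
    unfold scaleBid
    rw [bval_scale]
    exact hkey1 j _ (bval_nonneg _)
  have hcost2 : ∀ bi : Fin m → Bid,
      bidCost f (scaleBid (fun j => (c j)⁻¹) bi) = bidCost (fun j y => a j * f j y) bi := by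
    intro bi
    unfold bidCost
    refine Finset.sum_congr rfl fun j _ => ?_
    show f j (bval (scaleBid (fun j => (c j)⁻¹) bi j)) = a j * f j (bval (bi j))
    unfold scaleBid
    rw [bval_scale]
    exact hkey2 j _ (bval_nonneg _)
  refine ⟨fun k => scaleBid c (b k), ⟨fun i => ?_, fun i bi' hbi' => ?_⟩, ?_⟩
  · unfold feasibleBid
    rw [hcost1]
    exact hfeas i
  · set bi'' : Fin m → Bid := scaleBid (fun j => (c j)⁻¹) bi' with hbi''_def
    have hfe'' : feasibleBid f bi'' := by
      unfold feasibleBid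
      rw [hbi''_def, hcost2]
      exact hbi'
    have hupdate : Function.update (fun k => scaleBid c (b k)) i bi'
        = fun k => scaleBid c ((Function.update b i bi'') k) := by
      funext k
      by_cases hk : k = i
      · subst hk
        rw [Function.update_self, Function.update_self]
        funext j
        rw [hbi''_def]
        unfold scaleBid
        rw [Option.map_map]
        have : ((fun r => c j * r) ∘ fun r => (c j)⁻¹ * r) = id := by
          funext r
          simp only [Function.comp_apply, id_eq, ← mul_assoc,
            mul_inv_cancel₀ (ne_of_gt (hcpos j)), one_mul]
        rw [this, Option.map_id]
        rfl
      · rw [Function.update_of_ne hk, Function.update_of_ne hk]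
    rw [hupdate, atp_scale c hcpos s _, atp_scale c hcpos s b]
    exact hne i bi'' hfe''
  · exact (atp_scale c hcpos s b).symm


end BandwidthAlloc
end
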